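/- Let α and β be finite types and let p be a probability mass function on α. For a channel W assigning to each x ∈ α a probability mass function W(x) on β, let I(p; W) denote the mutual information of the pair (X, Z) whose joint distribution is (x,z) ↦ p(x) W(x)(z). Then I(p; W) is a convex function of the channel: for any two channels W₁, W₂ and t ∈ [0,1], I(p; t W₁ + (1−t) W₂) ≤ t I(p; W₁) + (1−t) I(p; W₂), where (t W₁ + (1−t) W₂)(x) = t W₁(x) + (1−t) W₂(x). -/

import Mathlib

open Real

open Finset

lemma log_sum_ineq {α : Type*} [Fintype α] (c d : α → ℝ) (hc : ∀ x, 0 ≤ c x)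
    (hd : ∀ x, 0 ≤ d x) (h0 : ∀ x, d x = 0 → c x = 0) :
    (∑ x, c x) * Real.log ((∑ x, c x) / (∑ x, d x)) ≤ ∑ x, c x * Real.log (c x / d x) := by
  set D := ∑ x, d x with hD
  rcases eq_or_lt_of_le (Finset.sum_nonneg fun x _ => hd x) with h | h
  · have hall : ∀ x, d x = 0 := by
      intro x
      have := (Finset.sum_eq_zero_iff_of_nonneg (fun x _ => hd x)).mp h.symm
      exact this x (mem_univ x)
    have hall' : ∀ x, c x = 0 := fun x => h0 x (hall x)
    simp [hall']
  · have hJ := convexOn_mul_log.map_sum_le (t := Finset.univ)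
      (w := fun x => d x / D) (p := fun x => c x / d x)
      (fun i _ => div_nonneg (hd i) h.le)
      (by rw [← Finset.sum_div]; exact div_self h.ne')
      (fun i _ => Set.mem_Ici.mpr (div_nonneg (hc i) (hd i)))
    have hwr : ∀ x, (d x / D) • (c x / d x) = c x / D := by
      intro x
      rcases eq_or_lt_of_le (hd x) with h' | h'
      · simp [← h', h0 x h'.symm]
      · rw [smul_eq_mul, div_mul_div_comm, mul_comm (d x) (c x), mul_div_mul_right _ _ h'.ne']
    rw [show ∑ i, (fun x => d x / D) i • (fun x => c x / d x) i = (∑ x, c x) / D by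
      simp only [smul_eq_mul]
      rw [Finset.sum_congr rfl fun x _ => by simpa [smul_eq_mul] using hwr x,
        ← Finset.sum_div]] at hJ
    simp only [smul_eq_mul] at hJ
    have hJ' := mul_le_mul_of_nonneg_left hJ h.le
    calc (∑ x, c x) * Real.log ((∑ x, c x) / D)
        = D * ((∑ x, c x) / D * Real.log ((∑ x, c x) / D)) := by rw [← mul_assoc, mul_div_cancel₀ _ (show D ≠ 0 from h.ne')]
      _ ≤ D * ∑ i, d i / D * (c i / d i * Real.log (c i / d i)) := hJ'
      _ = ∑ i, c i * Real.log (c i / d i) := by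
          rw [Finset.mul_sum]
          refine Finset.sum_congr rfl fun x _ => ?_
          rcases eq_or_lt_of_le (hd x) with h' | h'
          · simp [← h', h0 x h'.symm]
          · rw [← mul_assoc, mul_div_cancel₀ _ (show D ≠ 0 from h.ne'), ← mul_assoc,
              mul_div_cancel₀ _ h'.ne']

/-- Shannon entropy of a (sub)probability vector on a finite type:
`H(q) = ∑ y, −q(y) log q(y)` (with `0 log 0 = 0`). -/
noncomputable def ent {γ : Type*} [Fintype γ] (q : γ → ℝ) : ℝ :=
  ∑ y : γ, Real.negMulLog (q y)


lemma ident (t a b : ℝ) (ht : 0 < t) (ht' : t < 1) (ha : 0 ≤ a) (hb : 0 ≤ b) :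
    Real.negMulLog (t*a + (1-t)*b) - t * Real.negMulLog a - (1-t) * Real.negMulLog b
      = t * (a * Real.log (a / (t*a+(1-t)*b))) + (1-t) * (b * Real.log (b / (t*a+(1-t)*b))) := by
  set m := t*a + (1-t)*b with hm
  have hm0 : 0 ≤ m := by nlinarith
  rcases eq_or_lt_of_le hm0 with h | h
  · have ha0 : a = 0 := by nlinarith
    have hb0 : b = 0 := by nlinarith
    simp [hm, ha0, hb0]
  · have hla : a * Real.log (a / m) = a * Real.log a - a * Real.log m := by
      rcases eq_or_lt_of_le ha with h' | h'
      · simp [← h']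
      · rw [Real.log_div h'.ne' h.ne']; ring
    have hlb : b * Real.log (b / m) = b * Real.log b - b * Real.log m := by
      rcases eq_or_lt_of_le hb with h' | h'
      · simp [← h']
      · rw [Real.log_div h'.ne' h.ne']; ring
    simp only [Real.negMulLog, hla, hlb]
    ring

lemma ent_joint {α β : Type*} [Fintype α] [Fintype β] (p : α → ℝ) (W : α → β → ℝ)
    (hW : ∀ x, ∑ z : β, W x z = 1) :
    ent (fun xz : α × β => p xz.1 * W xz.1 xz.2) = ent p + ∑ x : α, p x * ent (W x) := by
  simp only [ent, Fintype.sum_prod_type, Real.negMulLog_mul]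
  rw [← Finset.sum_add_distrib]
  refine Finset.sum_congr rfl fun x _ => ?_
  rw [Finset.sum_add_distrib, ← Finset.sum_mul, hW x, one_mul, Finset.mul_sum]

lemma key {α : Type*} [Fintype α] (p a m : α → ℝ) (hp : ∀ x, 0 ≤ p x)
    (ha : ∀ x, 0 ≤ a x) (hm : ∀ x, 0 ≤ m x) (h0 : ∀ x, m x = 0 → a x = 0) :
    (∑ x, p x * a x) * Real.log ((∑ x, p x * a x) / (∑ x, p x * m x))
      ≤ ∑ x, p x * (a x * Real.log (a x / m x)) := by
  have H := log_sum_ineq (fun x => p x * a x) (fun x => p x * m x)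
    (fun x => mul_nonneg (hp x) (ha x)) (fun x => mul_nonneg (hp x) (hm x))
    (fun x hx => by
      have hx' : p x * m x = 0 := hx
      rcases mul_eq_zero.mp hx' with h | h
      · show p x * a x = 0
        simp [h]
      · show p x * a x = 0
        simp [h0 x h])
  refine H.trans_eq (Finset.sum_congr rfl fun x _ => ?_)
  rcases eq_or_lt_of_le (hp x) with h' | h'
  · simp [← h']
  · rw [mul_div_mul_left _ _ h'.ne']; ring

lemma main_est {α β : Type*} [Fintype α] [Fintype β] (p : α → ℝ) (W₁ W₂ : α → β → ℝ)
    (hp : ∀ x, 0 ≤ p x) (h1 : ∀ x z, 0 ≤ W₁ x z) (h2 : ∀ x z, 0 ≤ W₂ x z)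
    (t : ℝ) (ht : 0 < t) (ht' : t < 1) :
    ∑ z : β, (Real.negMulLog (t * (∑ x : α, p x * W₁ x z) + (1-t) * (∑ x : α, p x * W₂ x z))
        - t * Real.negMulLog (∑ x : α, p x * W₁ x z)
        - (1-t) * Real.negMulLog (∑ x : α, p x * W₂ x z))
      ≤ ∑ x : α, p x * ∑ z : β, (Real.negMulLog (t * W₁ x z + (1-t) * W₂ x z)
        - t * Real.negMulLog (W₁ x z) - (1-t) * Real.negMulLog (W₂ x z)) := by
  have hq1 : ∀ z, 0 ≤ ∑ x : α, p x * W₁ x z :=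
    fun z => Finset.sum_nonneg fun x _ => mul_nonneg (hp x) (h1 x z)
  have hq2 : ∀ z, 0 ≤ ∑ x : α, p x * W₂ x z :=
    fun z => Finset.sum_nonneg fun x _ => mul_nonneg (hp x) (h2 x z)
  have hq : ∀ z, (∑ x : α, p x * (t * W₁ x z + (1-t) * W₂ x z))
      = t * (∑ x : α, p x * W₁ x z) + (1-t) * (∑ x : α, p x * W₂ x z) := by
    intro z
    rw [Finset.mul_sum, Finset.mul_sum, ← Finset.sum_add_distrib]
    exact Finset.sum_congr rfl fun x _ => by ring
  have step1 : ∀ z, (∑ x : α, p x * W₁ x z) * Real.log ((∑ x : α, p x * W₁ x z)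
        / (t * (∑ x : α, p x * W₁ x z) + (1-t) * (∑ x : α, p x * W₂ x z)))
      ≤ ∑ x : α, p x * (W₁ x z * Real.log (W₁ x z / (t * W₁ x z + (1-t) * W₂ x z))) := by
    intro z
    rw [← hq z]
    exact key p (fun x => W₁ x z) (fun x => t * W₁ x z + (1-t) * W₂ x z) hp
      (fun x => h1 x z)
      (fun x => by nlinarith [h1 x z, h2 x z])
      (fun x hx => by nlinarith [h1 x z, h2 x z])
  have step2 : ∀ z, (∑ x : α, p x * W₂ x z) * Real.log ((∑ x : α, p x * W₂ x z)
        / (t * (∑ x : α, p x * W₁ x z) + (1-t) * (∑ x : α, p x * W₂ x z)))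
      ≤ ∑ x : α, p x * (W₂ x z * Real.log (W₂ x z / (t * W₁ x z + (1-t) * W₂ x z))) := by
    intro z
    rw [← hq z]
    exact key p (fun x => W₂ x z) (fun x => t * W₁ x z + (1-t) * W₂ x z) hp
      (fun x => h2 x z)
      (fun x => by nlinarith [h1 x z, h2 x z])
      (fun x hx => by nlinarith [h1 x z, h2 x z])
  calc ∑ z : β, (Real.negMulLog (t * (∑ x : α, p x * W₁ x z) + (1-t) * (∑ x : α, p x * W₂ x z))
        - t * Real.negMulLog (∑ x : α, p x * W₁ x z)
        - (1-t) * Real.negMulLog (∑ x : α, p x * W₂ x z))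
      = ∑ z : β, (t * ((∑ x : α, p x * W₁ x z) * Real.log ((∑ x : α, p x * W₁ x z)
            / (t * (∑ x : α, p x * W₁ x z) + (1-t) * (∑ x : α, p x * W₂ x z))))
          + (1-t) * ((∑ x : α, p x * W₂ x z) * Real.log ((∑ x : α, p x * W₂ x z)
            / (t * (∑ x : α, p x * W₁ x z) + (1-t) * (∑ x : α, p x * W₂ x z))))) :=
        Finset.sum_congr rfl fun z _ => ident t _ _ ht ht' (hq1 z) (hq2 z)
    _ ≤ ∑ z : β, (t * (∑ x : α, p x * (W₁ x z * Real.log (W₁ x z / (t * W₁ x z + (1-t) * W₂ x z))))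
          + (1-t) * (∑ x : α, p x * (W₂ x z * Real.log (W₂ x z / (t * W₁ x z + (1-t) * W₂ x z))))) :=
        Finset.sum_le_sum fun z _ => add_le_add
          (mul_le_mul_of_nonneg_left (step1 z) ht.le)
          (mul_le_mul_of_nonneg_left (step2 z) (by linarith))
    _ = ∑ x : α, ∑ z : β, p x * (t * (W₁ x z * Real.log (W₁ x z / (t * W₁ x z + (1-t) * W₂ x z)))
          + (1-t) * (W₂ x z * Real.log (W₂ x z / (t * W₁ x z + (1-t) * W₂ x z)))) := by
        refine Eq.trans (Finset.sum_congr rfl fun z _ => ?_) Finset.sum_comm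
        rw [Finset.mul_sum, Finset.mul_sum, ← Finset.sum_add_distrib]
        exact Finset.sum_congr rfl fun x _ => by ring
    _ = ∑ x : α, p x * ∑ z : β, (Real.negMulLog (t * W₁ x z + (1-t) * W₂ x z)
          - t * Real.negMulLog (W₁ x z) - (1-t) * Real.negMulLog (W₂ x z)) := by
        refine Finset.sum_congr rfl fun x _ => ?_
        rw [Finset.mul_sum]
        exact Finset.sum_congr rfl fun z _ => by
          rw [ident t _ _ ht ht' (h1 x z) (h2 x z)]

/-- Mutual information `I(X; Z) = H(X) + H(Z) − H(X, Z)` of the pair `(X, Z)` whose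
joint distribution is `(x, z) ↦ p(x) W(x)(z)`, for an input pmf `p` on `α` and a
channel `W` from `α` to `β`. -/
noncomputable def mutualInfoChan {α β : Type*} [Fintype α] [Fintype β]
    (p : α → ℝ) (W : α → β → ℝ) : ℝ :=
  ent p + ent (fun z => ∑ x : α, p x * W x z)
    - ent (fun xz : α × β => p xz.1 * W xz.1 xz.2)

/-- **Mutual information is convex in the channel:** for a fixed input pmf `p` and
channels `W₁, W₂`, `I(p; t W₁ + (1−t) W₂) ≤ t I(p; W₁) + (1−t) I(p; W₂)` for
`t ∈ [0, 1]`. -/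
theorem mutualInfo_convex_in_channel {α β : Type*} [Fintype α] [Fintype β]
    (p : α → ℝ) (hp0 : ∀ x, 0 ≤ p x) (hp1 : ∑ x : α, p x = 1)
    (W₁ W₂ : α → β → ℝ)
    (hW₁ : ∀ x, (∀ z, 0 ≤ W₁ x z) ∧ ∑ z : β, W₁ x z = 1)
    (hW₂ : ∀ x, (∀ z, 0 ≤ W₂ x z) ∧ ∑ z : β, W₂ x z = 1)
    (t : ℝ) (ht0 : 0 ≤ t) (ht1 : t ≤ 1) :
    mutualInfoChan p (fun x z => t * W₁ x z + (1 - t) * W₂ x z)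
      ≤ t * mutualInfoChan p W₁ + (1 - t) * mutualInfoChan p W₂ := by
  rcases eq_or_lt_of_le ht0 with h0 | h0
  · rw [← h0]
    norm_num
  rcases eq_or_lt_of_le ht1 with h1 | h1
  · rw [h1]
    norm_num
  have hWt1 : ∀ x, ∑ z : β, (t * W₁ x z + (1 - t) * W₂ x z) = 1 := by
    intro x
    rw [Finset.sum_add_distrib, ← Finset.mul_sum, ← Finset.mul_sum, (hW₁ x).2, (hW₂ x).2]
    ring
  have hq : ∀ z, (∑ x : α, p x * (t * W₁ x z + (1 - t) * W₂ x z))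
      = t * (∑ x : α, p x * W₁ x z) + (1 - t) * (∑ x : α, p x * W₂ x z) := by
    intro z
    rw [Finset.mul_sum, Finset.mul_sum, ← Finset.sum_add_distrib]
    exact Finset.sum_congr rfl fun x _ => by ring
  have ME := main_est p W₁ W₂ hp0 (fun x z => (hW₁ x).1 z) (fun x z => (hW₂ x).1 z) t h0 h1
  have hL : (∑ z : β, (Real.negMulLog (t * (∑ x : α, p x * W₁ x z)
          + (1-t) * (∑ x : α, p x * W₂ x z))
        - t * Real.negMulLog (∑ x : α, p x * W₁ x z)
        - (1-t) * Real.negMulLog (∑ x : α, p x * W₂ x z)))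
      = ent (fun z => ∑ x : α, p x * (t * W₁ x z + (1 - t) * W₂ x z))
        - t * ent (fun z => ∑ x : α, p x * W₁ x z)
        - (1-t) * ent (fun z => ∑ x : α, p x * W₂ x z) := by
    simp only [ent, Finset.mul_sum]
    rw [← Finset.sum_sub_distrib, ← Finset.sum_sub_distrib]
    exact Finset.sum_congr rfl fun z _ => by rw [hq z]; rw [← Finset.mul_sum, ← Finset.mul_sum]
  have hR : (∑ x : α, p x * ∑ z : β, (Real.negMulLog (t * W₁ x z + (1-t) * W₂ x z)
        - t * Real.negMulLog (W₁ x z) - (1-t) * Real.negMulLog (W₂ x z)))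
      = (∑ x : α, p x * ent (fun z => t * W₁ x z + (1 - t) * W₂ x z))
        - t * (∑ x : α, p x * ent (W₁ x)) - (1-t) * (∑ x : α, p x * ent (W₂ x)) := by
    rw [Finset.mul_sum, Finset.mul_sum, ← Finset.sum_sub_distrib, ← Finset.sum_sub_distrib]
    refine Finset.sum_congr rfl fun x _ => ?_
    have hx : ∑ z : β, (Real.negMulLog (t * W₁ x z + (1-t) * W₂ x z)
          - t * Real.negMulLog (W₁ x z) - (1-t) * Real.negMulLog (W₂ x z))
        = ent (fun z => t * W₁ x z + (1 - t) * W₂ x z)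
          - t * ent (W₁ x) - (1-t) * ent (W₂ x) := by
      simp only [ent, Finset.mul_sum]
      rw [← Finset.sum_sub_distrib, ← Finset.sum_sub_distrib]
    rw [hx]
    ring
  rw [hL, hR] at ME
  simp only [mutualInfoChan, ent_joint p W₁ (fun x => (hW₁ x).2),
    ent_joint p W₂ (fun x => (hW₂ x).2),
    ent_joint p (fun x z => t * W₁ x z + (1 - t) * W₂ x z) hWt1]
  nlinarith [ME]
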